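/- arXiv:1510.02825 — 4 statements merged into one kernel-verified Lean document; each statement's English description precedes it below -/
import Mathlib

section
/- Let f : [0,T] → ℝ be continuous on [0,T] and continuously differentiable on (0,T], and suppose f attains its minimum over [0,T] at a point t₀ ∈ (0,T]. Then for every α ∈ (0,1), the Caputo fractional derivative of f at t₀, namely (1/Γ(1-α)) ∫_0^{t₀} (t₀-s)^{-α} f'(s) ds, is nonpositive, provided the integral converges. -/
open MeasureTheory

theorem caputo_deriv_nonpos_at_min (T t₀ α : ℝ) (f : ℝ → ℝ) (hT : 0 < T)
    (hα : α ∈ Set.Ioo (0:ℝ) 1)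
    (hcont : ContinuousOn f (Set.Icc 0 T))
    (hderiv : ∀ t ∈ Set.Ioc (0:ℝ) T, HasDerivAt f (deriv f t) t)
    (hC1 : ContinuousOn (deriv f) (Set.Ioc 0 T))
    (ht₀ : t₀ ∈ Set.Ioc (0:ℝ) T)
    (hmin : ∀ t ∈ Set.Icc (0:ℝ) T, f t₀ ≤ f t)
    (hint : IntervalIntegrable (fun s => (t₀ - s) ^ (-α) * deriv f s) volume 0 t₀) :
    (1 / Real.Gamma (1 - α)) * ∫ s in (0:ℝ)..t₀, (t₀ - s) ^ (-α) * deriv f s ≤ 0 := by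
  obtain ⟨hα0, hα1⟩ := hα
  obtain ⟨ht₀0, ht₀T⟩ := ht₀
  have hΓ : 0 < Real.Gamma (1 - α) := Real.Gamma_pos_of_pos (by linarith)
  set G : ℝ → ℝ := deriv f with hGdef
  set φ : ℝ → ℝ := fun s => (t₀ - s) ^ (-α) with hφdef
  -- reduce to showing the integral is nonpositive
  suffices hI : (∫ s in (0:ℝ)..t₀, φ s * G s) ≤ 0 by
    exact mul_nonpos_of_nonneg_of_nonpos (by positivity) hI
  -- integrability of |φ * G|
  have hintK : IntervalIntegrable (fun s => |φ s * G s|) volume 0 t₀ := hint.abs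
  -- continuity of s ↦ (t₀ - s) ^ α
  have hmulcont : Continuous (fun s : ℝ => (t₀ - s) ^ α) := by
    rw [continuous_iff_continuousAt]
    intro s
    exact (Real.continuousAt_rpow_const _ _ (Or.inr hα0.le)).comp
      ((continuous_const.sub continuous_id).continuousAt)
  -- integrability of G on subintervals of [0, t₀]
  have hGint : ∀ a b : ℝ, 0 ≤ a → b ≤ t₀ → a ≤ b → IntervalIntegrable G volume a b := by
    intro a b ha hb hab
    have hsub : Set.uIcc a b ⊆ Set.uIcc 0 t₀ := by
      rw [Set.uIcc_of_le hab, Set.uIcc_of_le ht₀0.le]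
      exact Set.Icc_subset_Icc ha hb
    have h1 : IntervalIntegrable (fun s => φ s * G s) volume a b := hint.mono_set hsub
    have h2 : IntervalIntegrable (fun s => (t₀ - s) ^ α * (φ s * G s)) volume a b :=
      h1.continuousOn_mul hmulcont.continuousOn
    rw [intervalIntegrable_iff_integrableOn_Ioc_of_le hab] at h2 ⊢
    have hne : ∀ᵐ s : ℝ ∂(volume.restrict (Set.Ioc a b)), s ≠ t₀ := by
      refine ae_restrict_of_ae ?_
      rw [ae_iff]
      have : {s : ℝ | ¬ s ≠ t₀} = {t₀} := by ext s; simp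
      rw [this]; exact measure_singleton t₀
    refine h2.congr ?_
    filter_upwards [ae_restrict_mem measurableSet_Ioc, hne] with s hs hst
    have hpos : 0 < t₀ - s := by
      have : s < t₀ := lt_of_le_of_ne (hs.2.trans hb) hst
      linarith
    show (t₀ - s) ^ α * (φ s * G s) = G s
    rw [hφdef]
    simp only []
    rw [← mul_assoc, ← Real.rpow_add hpos, add_neg_cancel, Real.rpow_zero, one_mul]
  -- the key pointwise inequality for x ∈ (0, t₀)
  have key : ∀ x ∈ Set.Ioo (0:ℝ) t₀,
      (∫ s in (0:ℝ)..x, φ s * G s) ≤ ∫ s in x..t₀, |φ s * G s| := by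
    intro x hx
    obtain ⟨hx0, hxt⟩ := hx
    have hxT : x ≤ T := hxt.le.trans ht₀T
    -- φ has derivative u' on a neighborhood of [0, x]
    set u' : ℝ → ℝ := fun s => α * (t₀ - s) ^ (-α - 1) with hu'def
    have hφderiv : ∀ s ∈ Set.Icc (0:ℝ) x, HasDerivAt φ (u' s) s := by
      intro s hs
      have hpos : 0 < t₀ - s := by linarith [hs.2]
      have h1 : HasDerivAt (fun s : ℝ => t₀ - s) (-1) s := by
        simpa using (hasDerivAt_id s).const_sub t₀
      have h2 := (Real.hasDerivAt_rpow_const (p := -α) (Or.inl hpos.ne')).comp s h1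
      refine h2.congr_deriv ?_
      show _ = α * (t₀ - s) ^ (-α - 1)
      ring
    have hφcont : ContinuousOn φ (Set.uIcc 0 x) := by
      rw [Set.uIcc_of_le hx0.le]
      exact fun s hs => ((hφderiv s hs).continuousAt).continuousWithinAt
    have hu'cont : ContinuousOn u' (Set.uIcc 0 x) := by
      rw [Set.uIcc_of_le hx0.le]
      intro s hs
      have hpos : 0 < t₀ - s := by linarith [hs.2]
      exact (continuousAt_const.mul ((Real.continuousAt_rpow_const _ _
        (Or.inl hpos.ne')).comp ((continuous_const.sub continuous_id).continuousAt))).continuousWithinAt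
    have hu'int : IntervalIntegrable u' volume 0 x := hu'cont.intervalIntegrable
    have hfcont : ContinuousOn f (Set.uIcc 0 x) := by
      rw [Set.uIcc_of_le hx0.le]
      exact hcont.mono (Set.Icc_subset_Icc le_rfl hxT)
    have hGx : IntervalIntegrable G volume 0 x := hGint 0 x le_rfl hxt.le hx0.le
    -- integration by parts on [0, x]
    have hparts : (∫ s in (0:ℝ)..x, φ s * G s)
        = φ x * f x - φ 0 * f 0 - ∫ s in (0:ℝ)..x, u' s * f s := by
      apply intervalIntegral.integral_mul_deriv_eq_deriv_mul_of_hasDerivAt hφcont hfcont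
        ?_ ?_ hu'int hGx
      · intro s hs
        rw [min_eq_left hx0.le, max_eq_right hx0.le] at hs
        exact hφderiv s (Set.mem_Icc.mpr ⟨hs.1.le, hs.2.le⟩)
      · intro s hs
        rw [min_eq_left hx0.le, max_eq_right hx0.le] at hs
        exact hderiv s ⟨hs.1, hs.2.le.trans hxT⟩
    -- ∫ u' = φ x - φ 0
    have hFTCφ : (∫ s in (0:ℝ)..x, u' s) = φ x - φ 0 := by
      apply intervalIntegral.integral_eq_sub_of_hasDerivAt ?_ hu'int
      intro s hs
      rw [Set.uIcc_of_le hx0.le] at hs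
      exact hφderiv s hs
    -- lower bound for ∫ u' * f
    have hu'nonneg : ∀ s ∈ Set.Icc (0:ℝ) x, 0 ≤ u' s := by
      intro s hs
      have hpos : 0 < t₀ - s := by linarith [hs.2]
      exact mul_nonneg hα0.le (Real.rpow_nonneg hpos.le _)
    have hmono : (φ x - φ 0) * f t₀ ≤ ∫ s in (0:ℝ)..x, u' s * f s := by
      have h1 : (∫ s in (0:ℝ)..x, u' s * f t₀) ≤ ∫ s in (0:ℝ)..x, u' s * f s := by
        apply intervalIntegral.integral_mono_on hx0.le (hu'int.mul_const _)
          (hu'int.mul_continuousOn hfcont)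
        intro s hs
        exact mul_le_mul_of_nonneg_left (hmin s ⟨hs.1, hs.2.trans hxT⟩) (hu'nonneg s hs)
      calc (φ x - φ 0) * f t₀ = ∫ s in (0:ℝ)..x, u' s * f t₀ := by
            rw [intervalIntegral.integral_mul_const, hFTCφ]
        _ ≤ _ := h1
    -- so F x ≤ φ x * (f x - f t₀)
    have hφ0 : 0 ≤ φ 0 := Real.rpow_nonneg (by linarith) _
    have hf0 : f t₀ ≤ f 0 := hmin 0 ⟨le_rfl, hT.le⟩
    have step1 : (∫ s in (0:ℝ)..x, φ s * G s) ≤ φ x * (f x - f t₀) := by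
      rw [hparts]
      have h2 : φ 0 * (f t₀ - f 0) ≤ 0 :=
        mul_nonpos_of_nonneg_of_nonpos hφ0 (by linarith)
      nlinarith [hmono]
    -- FTC for f on [x, t₀]
    have hGxt : IntervalIntegrable G volume x t₀ := hGint x t₀ hx0.le le_rfl hxt.le
    have hfFTC : (∫ s in x..t₀, G s) = f t₀ - f x := by
      apply intervalIntegral.integral_eq_sub_of_hasDerivAt ?_ hGxt
      intro s hs
      rw [Set.uIcc_of_le hxt.le] at hs
      exact hderiv s ⟨lt_of_lt_of_le hx0 hs.1, hs.2.trans ht₀T⟩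
    -- bound f x - f t₀
    have habs : f x - f t₀ ≤ ∫ s in x..t₀, |G s| := by
      calc f x - f t₀ = -(∫ s in x..t₀, G s) := by rw [hfFTC]; ring
        _ ≤ |∫ s in x..t₀, G s| := neg_le_abs _
        _ ≤ ∫ s in x..t₀, |G s| := intervalIntegral.abs_integral_le_integral_abs hxt.le
    -- bound ∫ |G| by (t₀ - x)^α * ∫ |φ G|
    have hxpos : 0 < t₀ - x := by linarith
    have habs2 : (∫ s in x..t₀, |G s|) ≤ (t₀ - x) ^ α * ∫ s in x..t₀, |φ s * G s| := by
      rw [← intervalIntegral.integral_const_mul]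
      have hsub : Set.uIcc x t₀ ⊆ Set.uIcc 0 t₀ := by
        rw [Set.uIcc_of_le hxt.le, Set.uIcc_of_le ht₀0.le]
        exact Set.Icc_subset_Icc hx0.le le_rfl
      apply intervalIntegral.integral_mono_ae_restrict hxt.le hGxt.abs
        ((hintK.mono_set hsub).const_mul _)
      have hne : ∀ᵐ s : ℝ ∂(volume.restrict (Set.Icc x t₀)), s ≠ t₀ := by
        refine ae_restrict_of_ae ?_
        rw [ae_iff]
        have : {s : ℝ | ¬ s ≠ t₀} = {t₀} := by ext s; simp
        rw [this]; exact measure_singleton t₀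
      filter_upwards [ae_restrict_mem measurableSet_Icc, hne] with s hs hst
      have hspos : 0 < t₀ - s := by
        have : s < t₀ := lt_of_le_of_ne hs.2 hst
        linarith
      have hφs : 0 ≤ φ s := Real.rpow_nonneg hspos.le _
      have hone : 1 ≤ (t₀ - x) ^ α * φ s := by
        have h1 : (t₀ - x) ^ (-α) ≤ φ s := by
          apply Real.rpow_le_rpow_of_nonpos hspos (by linarith [hs.1]) (by linarith)
        calc (1:ℝ) = (t₀ - x) ^ α * (t₀ - x) ^ (-α) := by
              rw [← Real.rpow_add hxpos, add_neg_cancel, Real.rpow_zero]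
          _ ≤ (t₀ - x) ^ α * φ s :=
              mul_le_mul_of_nonneg_left h1 (Real.rpow_nonneg hxpos.le _)
      calc |G s| = 1 * |G s| := (one_mul _).symm
        _ ≤ ((t₀ - x) ^ α * φ s) * |G s| :=
            mul_le_mul_of_nonneg_right hone (abs_nonneg _)
        _ = (t₀ - x) ^ α * |φ s * G s| := by
            rw [abs_mul, abs_of_nonneg hφs]; ring
    -- combine
    have hφx : φ x = ((t₀ - x) ^ α)⁻¹ := by
      rw [hφdef]
      simp only []
      rw [Real.rpow_neg hxpos.le]
    have hφxnn : 0 ≤ φ x := Real.rpow_nonneg hxpos.le _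
    calc (∫ s in (0:ℝ)..x, φ s * G s) ≤ φ x * (f x - f t₀) := step1
      _ ≤ φ x * ∫ s in x..t₀, |G s| := by
          apply mul_le_mul_of_nonneg_left habs hφxnn
      _ ≤ φ x * ((t₀ - x) ^ α * ∫ s in x..t₀, |φ s * G s|) :=
          mul_le_mul_of_nonneg_left habs2 hφxnn
      _ = ∫ s in x..t₀, |φ s * G s| := by
          rw [← mul_assoc, hφx, inv_mul_cancel₀ (ne_of_gt (Real.rpow_pos_of_pos hxpos _)), one_mul]
  -- now take limits x → t₀⁻
  set C := ∫ s in (0:ℝ)..t₀, |φ s * G s| with hCdef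
  have hsplit : ∀ x ∈ Set.Icc (0:ℝ) t₀,
      (∫ s in x..t₀, |φ s * G s|) = C - ∫ s in (0:ℝ)..x, |φ s * G s| := by
    intro x hx
    have hs1 : Set.uIcc 0 x ⊆ Set.uIcc 0 t₀ := by
      rw [Set.uIcc_of_le hx.1, Set.uIcc_of_le ht₀0.le]
      exact Set.Icc_subset_Icc le_rfl hx.2
    have hs2 : Set.uIcc x t₀ ⊆ Set.uIcc 0 t₀ := by
      rw [Set.uIcc_of_le hx.2, Set.uIcc_of_le ht₀0.le]
      exact Set.Icc_subset_Icc hx.1 le_rfl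
    have h1 : IntervalIntegrable (fun s => |φ s * G s|) volume 0 x := hintK.mono_set hs1
    have h2 : IntervalIntegrable (fun s => |φ s * G s|) volume x t₀ := hintK.mono_set hs2
    have := intervalIntegral.integral_add_adjacent_intervals h1 h2
    rw [hCdef]
    linarith
  have huIcc : Set.uIcc (0:ℝ) t₀ = Set.Icc 0 t₀ := Set.uIcc_of_le ht₀0.le
  have hP : Filter.Tendsto (fun x => ∫ s in (0:ℝ)..x, φ s * G s) (nhdsWithin t₀ (Set.Ioo 0 t₀))
      (nhds (∫ s in (0:ℝ)..t₀, φ s * G s)) := by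
    have h := (intervalIntegral.continuousOn_primitive_interval' hint
      Set.left_mem_uIcc).continuousWithinAt (by rw [huIcc]; exact Set.right_mem_Icc.mpr ht₀0.le)
    exact h.mono_left (nhdsWithin_mono _ (by rw [huIcc]; exact Set.Ioo_subset_Icc_self))
  have hQ : Filter.Tendsto (fun x => ∫ s in (0:ℝ)..x, |φ s * G s|) (nhdsWithin t₀ (Set.Ioo 0 t₀))
      (nhds C) := by
    have h := (intervalIntegral.continuousOn_primitive_interval' hintK
      Set.left_mem_uIcc).continuousWithinAt (by rw [huIcc]; exact Set.right_mem_Icc.mpr ht₀0.le)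
    exact h.mono_left (nhdsWithin_mono _ (by rw [huIcc]; exact Set.Ioo_subset_Icc_self))
  have hH : Filter.Tendsto (fun x => C - ∫ s in (0:ℝ)..x, |φ s * G s|)
      (nhdsWithin t₀ (Set.Ioo 0 t₀)) (nhds 0) := by
    have := (tendsto_const_nhds (x := C) (f := nhdsWithin t₀ (Set.Ioo 0 t₀))).sub hQ
    simpa using this
  have hne : (nhdsWithin t₀ (Set.Ioo 0 t₀)).NeBot := right_nhdsWithin_Ioo_neBot ht₀0
  refine le_of_tendsto_of_tendsto hP hH ?_
  filter_upwards [self_mem_nhdsWithin] with x hx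
  calc (∫ s in (0:ℝ)..x, φ s * G s) ≤ ∫ s in x..t₀, |φ s * G s| := key x hx
    _ = C - ∫ s in (0:ℝ)..x, |φ s * G s| := hsplit x (Set.Ioo_subset_Icc_self hx)
end

section
/- Let H be a real N×N matrix, ω₀ > 0, and suppose (ω₀ I + H)^{-1} exists and has all entries nonnegative. Let {ω_j}_{j≥0} be real numbers with ω_j < 0 for j ≥ 1 and ∑_{j=0}^n ω_j > 0 for all n ≥ 1. Define the sequence U^0 = V and U^n = (ω₀ I + H)^{-1}( (∑_{j=0}^{n-1} ω_j) V - ∑_{j=1}^{n-1} ω_{n-j} U^j ) for n ≥ 1. Then V ≥ 0 (elementwise) implies U^n ≥ 0 for all n ≥ 0. -/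
theorem fully_discrete_nonnegativity {N : ℕ} (H : Matrix (Fin N) (Fin N) ℝ)
    (ω : ℕ → ℝ) (hω0 : 0 < ω 0)
    (hinv : IsUnit (ω 0 • (1 : Matrix (Fin N) (Fin N) ℝ) + H))
    (hinvnn : ∀ i j, 0 ≤ (ω 0 • (1 : Matrix (Fin N) (Fin N) ℝ) + H)⁻¹ i j)
    (hωneg : ∀ j, 1 ≤ j → ω j < 0)
    (hωsum : ∀ n, 1 ≤ n → 0 < ∑ j ∈ Finset.range (n + 1), ω j)
    (V : Fin N → ℝ) (hV : ∀ i, 0 ≤ V i)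
    (U : ℕ → Fin N → ℝ) (hU0 : U 0 = V)
    (hUn : ∀ n, 1 ≤ n → U n =
      (ω 0 • (1 : Matrix (Fin N) (Fin N) ℝ) + H)⁻¹.mulVec
        ((∑ j ∈ Finset.range n, ω j) • V - ∑ j ∈ Finset.Icc 1 (n - 1), ω (n - j) • U j)) :
    ∀ n i, 0 ≤ U n i := by
  intro n
  induction n using Nat.strong_induction_on with
  | _ n ih =>
    match n with
    | 0 => intro i; rw [hU0]; exact hV i
    | (m+1) =>
      intro i
      rw [hUn (m+1) (Nat.le_add_left 1 m)]
      have hW : ∀ k, 0 ≤ ((∑ j ∈ Finset.range (m+1), ω j) • V -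
          ∑ j ∈ Finset.Icc 1 (m+1-1), ω (m+1-j) • U j) k := by
        intro k
        have hs : 0 < ∑ j ∈ Finset.range (m+1), ω j := by
          rcases Nat.eq_zero_or_pos m with h | h
          · subst h; simpa using hω0
          · have := hωsum m h
            simpa using this
        have h1 : 0 ≤ (∑ j ∈ Finset.range (m+1), ω j) * V k :=
          mul_nonneg hs.le (hV k)
        have h2 : (∑ j ∈ Finset.Icc 1 (m+1-1), ω (m+1-j) • U j) k ≤ 0 := by
          rw [Finset.sum_apply]
          apply Finset.sum_nonpos
          intro j hj
          simp only [Finset.mem_Icc] at hj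
          have hj1 : 1 ≤ m + 1 - j := by omega
          have := hωneg (m+1-j) hj1
          have hUj : 0 ≤ U j k := ih j (by omega) k
          exact mul_nonpos_of_nonpos_of_nonneg this.le hUj
        simp only [Pi.sub_apply, Pi.smul_apply, smul_eq_mul]
        linarith
      rw [Matrix.mulVec]
      apply Finset.sum_nonneg
      intro j _
      exact mul_nonneg (hinvnn i j) (hW j)
end

section
/- Let H be a real N×N matrix with h_{ii} > 0 and row diagonal dominance ∑_{j≠i}|h_{ij}| ≤ h_{ii} for all i, let ω₀ > 0, and let {ω_j}_{j≥1} be negative reals with ∑_{j=0}^n ω_j > 0 for all n ≥ 1. Define U^0 = V and U^n = (ω₀ I + H)^{-1}( (∑_{j=0}^{n-1} ω_j) V - ∑_{j=1}^{n-1} ω_{n-j} U^j ) for n ≥ 1. Then ‖U^n‖_∞ ≤ ‖V‖_∞ for every n ≥ 0. -/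
open Finset

lemma keyA {N : ℕ} (H : Matrix (Fin N) (Fin N) ℝ)
    (hdom : ∀ i, ∑ j ∈ Finset.univ.erase i, |H i j| ≤ H i i)
    {ω0 : ℝ} (hω0 : 0 < ω0) (x : Fin N → ℝ) :
    ω0 * ‖x‖ ≤ ‖(ω0 • (1 : Matrix (Fin N) (Fin N) ℝ) + H).mulVec x‖ := by
  cases isEmpty_or_nonempty (Fin N) with
  | inl h =>
    have : x = 0 := funext fun i => (h.false i).elim
    subst this
    simp [Matrix.mulVec_zero]
  | inr h =>
    obtain ⟨i, -, hi⟩ := Finset.exists_max_image Finset.univ (fun i => |x i|)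
      Finset.univ_nonempty
    have hxle : ‖x‖ ≤ |x i| := by
      apply pi_norm_le_iff_of_nonneg (abs_nonneg _) |>.mpr
      intro j; simpa [Real.norm_eq_abs] using hi j (Finset.mem_univ j)
    have hb : ((ω0 • (1 : Matrix (Fin N) (Fin N) ℝ) + H).mulVec x) i
        = (ω0 + H i i) * x i + ∑ j ∈ Finset.univ.erase i, H i j * x j := by
      simp only [Matrix.mulVec, dotProduct, Matrix.add_apply, Matrix.smul_apply,
        Matrix.one_apply, smul_eq_mul]
      have hc : ∀ j ∈ Finset.univ.erase i,
          (ω0 * (if i = j then 1 else 0) + H i j) * x j = H i j * x j := by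
        intro j hj
        rw [if_neg (fun e => (Finset.mem_erase.mp hj).1 e.symm)]
        ring
      rw [← Finset.sum_erase_add _ _ (Finset.mem_univ i), Finset.sum_congr rfl hc,
        if_pos rfl, add_comm]
      ring
    have hR : |∑ j ∈ Finset.univ.erase i, H i j * x j| ≤ H i i * |x i| := by
      calc |∑ j ∈ Finset.univ.erase i, H i j * x j|
          ≤ ∑ j ∈ Finset.univ.erase i, |H i j * x j| := Finset.abs_sum_le_sum_abs _ _
        _ ≤ ∑ j ∈ Finset.univ.erase i, |H i j| * |x i| := by
            apply Finset.sum_le_sum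
            intro j hj
            rw [abs_mul]
            exact mul_le_mul_of_nonneg_left (hi j (Finset.mem_univ j)) (abs_nonneg _)
        _ = (∑ j ∈ Finset.univ.erase i, |H i j|) * |x i| := by rw [Finset.sum_mul]
        _ ≤ H i i * |x i| := mul_le_mul_of_nonneg_right (hdom i) (abs_nonneg _)
    have hbi : ω0 * |x i| ≤ |((ω0 • (1 : Matrix (Fin N) (Fin N) ℝ) + H).mulVec x) i| := by
      rw [hb]
      have h1 : |(ω0 + H i i) * x i| - |∑ j ∈ Finset.univ.erase i, H i j * x j|
          ≤ |(ω0 + H i i) * x i + ∑ j ∈ Finset.univ.erase i, H i j * x j| := by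
        have := abs_add_le ((ω0 + H i i) * x i + ∑ j ∈ Finset.univ.erase i, H i j * x j)
          (-(∑ j ∈ Finset.univ.erase i, H i j * x j))
        simp only [add_neg_cancel_right, abs_neg] at this
        linarith
      have h2 : |(ω0 + H i i) * x i| = (ω0 + H i i) * |x i| := by
        rw [abs_mul, abs_of_pos]
        have := (abs_nonneg (H i i)); have := hdom i
        have hHnn : 0 ≤ H i i := le_trans (Finset.sum_nonneg fun j _ => abs_nonneg _) (hdom i)
        linarith
      nlinarith [hR, h1]
    calc ω0 * ‖x‖ ≤ ω0 * |x i| := by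
          exact mul_le_mul_of_nonneg_left hxle hω0.le
      _ ≤ |((ω0 • (1 : Matrix (Fin N) (Fin N) ℝ) + H).mulVec x) i| := hbi
      _ ≤ ‖(ω0 • (1 : Matrix (Fin N) (Fin N) ℝ) + H).mulVec x‖ := by
          simpa [Real.norm_eq_abs] using norm_le_pi_norm ((ω0 • (1 : Matrix (Fin N) (Fin N) ℝ) + H).mulVec x) i

theorem fully_discrete_maxnorm_contraction {N : ℕ} (H : Matrix (Fin N) (Fin N) ℝ)
    (hdiag : ∀ i, 0 < H i i)
    (hdom : ∀ i, ∑ j ∈ Finset.univ.erase i, |H i j| ≤ H i i)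
    (ω : ℕ → ℝ) (hω0 : 0 < ω 0)
    (hωneg : ∀ j, 1 ≤ j → ω j < 0)
    (hωsum : ∀ n, 1 ≤ n → 0 < ∑ j ∈ Finset.range (n + 1), ω j)
    (V : Fin N → ℝ) (U : ℕ → Fin N → ℝ) (hU0 : U 0 = V)
    (hUn : ∀ n, 1 ≤ n → U n =
      (ω 0 • (1 : Matrix (Fin N) (Fin N) ℝ) + H)⁻¹.mulVec
        ((∑ j ∈ Finset.range n, ω j) • V - ∑ j ∈ Finset.Icc 1 (n - 1), ω (n - j) • U j)) :
    ∀ n, ‖U n‖ ≤ ‖V‖ := by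
  intro n
  induction n using Nat.strong_induction_on with
  | _ n IH =>
    rcases Nat.eq_zero_or_pos n with rfl | hn
    · rw [hU0]
    · set M := ω 0 • (1 : Matrix (Fin N) (Fin N) ℝ) + H with hM
      set b := (∑ j ∈ Finset.range n, ω j) • V
        - ∑ j ∈ Finset.Icc 1 (n - 1), ω (n - j) • U j with hbdef
      rw [hUn n hn]
      by_cases hdet : IsUnit M.det
      · -- positivity of the partial sum
        have hS : 0 < ∑ j ∈ Finset.range n, ω j := by
          rcases Nat.lt_or_ge n 2 with h2 | h2
          · have hn1 : n = 1 := by omega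
            subst hn1
            simpa using hω0
          · have := hωsum (n - 1) (by omega)
            rwa [Nat.sub_add_cancel (by omega)] at this
        have hre : ∑ j ∈ Finset.Icc 1 (n - 1), ω (n - j)
            = ∑ j ∈ Finset.Icc 1 (n - 1), ω j := by
          apply Finset.sum_nbij' (i := fun j => n - j) (j := fun j => n - j) <;>
            intros a ha <;> simp_all [Finset.mem_Icc] <;> omega
        have hsplit : ∑ j ∈ Finset.range n, ω j
            = ω 0 + ∑ j ∈ Finset.Icc 1 (n - 1), ω j := by
          have hrange : Finset.range n = insert 0 (Finset.Icc 1 (n - 1)) := by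
            ext x; simp only [Finset.mem_range, Finset.mem_insert, Finset.mem_Icc]; omega
          rw [hrange, Finset.sum_insert (by simp [Finset.mem_Icc])]
        have hbV : ‖b‖ ≤ ω 0 * ‖V‖ := by
          calc ‖b‖ ≤ ‖(∑ j ∈ Finset.range n, ω j) • V‖
                + ‖∑ j ∈ Finset.Icc 1 (n - 1), ω (n - j) • U j‖ := norm_sub_le _ _
            _ ≤ (∑ j ∈ Finset.range n, ω j) * ‖V‖
                + ∑ j ∈ Finset.Icc 1 (n - 1), (-(ω (n - j))) * ‖V‖ := by
                apply add_le_add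
                · rw [norm_smul, Real.norm_eq_abs, abs_of_pos hS]
                · refine (norm_sum_le _ _).trans (Finset.sum_le_sum fun j hj => ?_)
                  have hjm := Finset.mem_Icc.mp hj
                  have h1nj : 1 ≤ n - j := by omega
                  have hneg := hωneg (n - j) h1nj
                  rw [norm_smul, Real.norm_eq_abs, abs_of_neg hneg]
                  exact mul_le_mul_of_nonneg_left (IH j (by omega)) (by linarith)
            _ = ((∑ j ∈ Finset.range n, ω j)
                - ∑ j ∈ Finset.Icc 1 (n - 1), ω (n - j)) * ‖V‖ := by
                rw [← Finset.sum_mul, Finset.sum_neg_distrib]; ring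
            _ = ω 0 * ‖V‖ := by rw [hre, hsplit]; ring
        have hMx : M.mulVec (M⁻¹.mulVec b) = b := by
          rw [Matrix.mulVec_mulVec, Matrix.mul_nonsing_inv _ hdet, Matrix.one_mulVec]
        have h1 : ω 0 * ‖M⁻¹.mulVec b‖ ≤ ‖b‖ := by
          have := keyA H hdom hω0 (M⁻¹.mulVec b)
          rwa [← hM, hMx] at this
        exact le_of_mul_le_mul_left (h1.trans hbV) hω0
      · rw [Matrix.nonsing_inv_apply_not_isUnit _ hdet]
        simp [Matrix.zero_mulVec, norm_nonneg]
end

section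
/- Let μ : [0,1] → ℝ be Hölder continuous with exponent γ ∈ (0,1], nonnegative, with μ(0) > 0. Define P(s) = ∫_0^1 s^α μ(α) dα for 0 < s < 1. Then P(s) = -μ(0)/log s + O(|log s|^{-1-γ}) as s → 0⁺; in particular -P(s) log s → μ(0) as s → 0⁺. -/
open Filter Asymptotics

private lemma aux_int_exp (c : ℝ) (hc : c ≠ 0) :
    ∫ a in (0:ℝ)..1, Real.exp (c * a) = (Real.exp c - 1) / c := by
  have h : ∀ a ∈ Set.uIcc (0:ℝ) 1, HasDerivAt (fun x => Real.exp (c*x)/c) (Real.exp (c*a)) a := by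
    intro a _
    have h1 : HasDerivAt (fun x => Real.exp (c*x)) (Real.exp (c*a) * c) a := by
      simpa using ((hasDerivAt_id a).const_mul c).exp
    simpa [mul_div_assoc, mul_div_cancel_right₀ _ hc] using h1.div_const c
  rw [intervalIntegral.integral_eq_sub_of_hasDerivAt h
    ((Real.continuous_exp.comp (continuous_const.mul continuous_id)).intervalIntegrable 0 1)]
  simp [div_sub_div_same]
  ring

private lemma aux_rpow_exp_le {γ : ℝ} (hγ0 : 0 < γ) (hγ1 : γ ≤ 1) (x : ℝ) (hx : 0 ≤ x) :
    x ^ γ * Real.exp (-x) ≤ 1 := by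
  rcases le_or_gt x 1 with h | h
  · have h1 : x ^ γ ≤ 1 := Real.rpow_le_one hx h hγ0.le
    have h2 : Real.exp (-x) ≤ 1 := Real.exp_le_one_iff.mpr (by linarith)
    nlinarith [Real.rpow_nonneg hx γ, Real.exp_pos (-x)]
  · have h1 : x ^ γ ≤ x := by
      calc x ^ γ ≤ x ^ (1:ℝ) := Real.rpow_le_rpow_of_exponent_le h.le hγ1
      _ = x := Real.rpow_one x
    have h2 : x ≤ Real.exp x := (Real.add_one_le_exp x).trans' (by linarith)
    rw [Real.exp_neg, mul_inv_le_iff₀ (Real.exp_pos x), one_mul]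
    exact h1.trans h2

private lemma aux_cont {γ : ℝ} (hγ0 : 0 < γ) {μ : ℝ → ℝ} {C : ℝ}
    (hholder : ∀ a ∈ Set.Icc (0:ℝ) 1, ∀ c ∈ Set.Icc (0:ℝ) 1, |μ a - μ c| ≤ C * |a - c| ^ γ) :
    ContinuousOn μ (Set.Icc 0 1) := by
  intro a ha
  rw [ContinuousWithinAt, tendsto_iff_dist_tendsto_zero]
  have hb : Tendsto (fun c => C * |c - a| ^ γ) (nhdsWithin a (Set.Icc 0 1)) (nhds 0) := by
    have habs : ContinuousAt (fun c : ℝ => |c - a|) a := by fun_prop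
    have hg : ContinuousAt (fun x : ℝ => x ^ γ) (|a - a|) :=
      Real.continuousAt_rpow_const _ γ (Or.inr hγ0.le)
    have h2 : ContinuousAt (fun c : ℝ => |c - a| ^ γ) a :=
      ContinuousAt.comp (g := fun x : ℝ => x ^ γ) hg habs
    have : ContinuousAt (fun c : ℝ => C * |c - a| ^ γ) a := continuousAt_const.mul h2
    have := (this.continuousWithinAt (s := Set.Icc 0 1)).tendsto
    simpa [Real.zero_rpow hγ0.ne'] using this
  apply squeeze_zero' (Eventually.of_forall fun c => dist_nonneg) _ hb
  filter_upwards [self_mem_nhdsWithin] with c hc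
  rw [Real.dist_eq]
  simpa [abs_sub_comm] using hholder c hc a ha

theorem distributed_order_P_at_zero (γ : ℝ) (hγ : γ ∈ Set.Ioc (0:ℝ) 1)
    (μ : ℝ → ℝ) (C : ℝ)
    (hholder : ∀ a ∈ Set.Icc (0:ℝ) 1, ∀ c ∈ Set.Icc (0:ℝ) 1, |μ a - μ c| ≤ C * |a - c| ^ γ)
    (hnonneg : ∀ a ∈ Set.Icc (0:ℝ) 1, 0 ≤ μ a) (hμ0 : 0 < μ 0) :
    ((fun s : ℝ => (∫ a in (0:ℝ)..1, s ^ a * μ a) + μ 0 / Real.log s)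
        =O[nhdsWithin (0:ℝ) (Set.Ioi 0)] fun s : ℝ => |Real.log s| ^ (-(1 + γ))) ∧
      Tendsto (fun s : ℝ => -((∫ a in (0:ℝ)..1, s ^ a * μ a) * Real.log s))
        (nhdsWithin (0:ℝ) (Set.Ioi 0)) (nhds (μ 0)) := by
  obtain ⟨hγ0, hγ1⟩ := hγ
  have hC : 0 ≤ C := by
    have h := hholder 1 (by norm_num) 0 (by norm_num)
    rw [show |(1:ℝ) - 0| ^ γ = 1 by norm_num] at h
    nlinarith [abs_nonneg (μ 1 - μ 0)]
  have hcont : ContinuousOn μ (Set.Icc 0 1) := aux_cont hγ0 hholder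
  set l := nhdsWithin (0:ℝ) (Set.Ioi 0) with hl
  set P : ℝ → ℝ := fun s => ∫ a in (0:ℝ)..1, s ^ a * μ a with hPdef
  -- decomposition
  have key : ∀ s ∈ Set.Ioo (0:ℝ) 1,
      P s + μ 0 / Real.log s
        = μ 0 * s / Real.log s + ∫ a in (0:ℝ)..1, s ^ a * (μ a - μ 0) := by
    intro s hs
    have hs0 := hs.1
    have hlog : Real.log s < 0 := Real.log_neg hs0 hs.2
    have hlogne : Real.log s ≠ 0 := hlog.ne
    have hrw : (fun a : ℝ => s ^ a) = fun a => Real.exp (Real.log s * a) := by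
      funext a; rw [Real.rpow_def_of_pos hs0]
    have hsc : Continuous fun a : ℝ => s ^ a := by rw [hrw]; fun_prop
    have hint1 : IntervalIntegrable (fun a => s ^ a * μ a) MeasureTheory.volume 0 1 := by
      apply ContinuousOn.intervalIntegrable
      rw [Set.uIcc_of_le (by norm_num : (0:ℝ) ≤ 1)]
      exact hsc.continuousOn.mul hcont
    have hint2 : IntervalIntegrable (fun a => s ^ a * μ 0) MeasureTheory.volume 0 1 :=
      (hsc.intervalIntegrable 0 1).mul_const _
    have hIexp : ∫ a in (0:ℝ)..1, s ^ a = (s - 1) / Real.log s := by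
      rw [hrw, aux_int_exp _ hlogne, Real.exp_log hs0]
    have hsub : ∫ a in (0:ℝ)..1, s ^ a * (μ a - μ 0)
        = P s - (s - 1) / Real.log s * μ 0 := by
      simp_rw [mul_sub]
      rw [intervalIntegral.integral_sub hint1 hint2, intervalIntegral.integral_mul_const, hIexp]
    rw [hsub]
    field_simp
    ring
  -- error bound
  have Ebound : ∀ s ∈ Set.Ioo (0:ℝ) 1,
      |∫ a in (0:ℝ)..1, s ^ a * (μ a - μ 0)| ≤ 4 * C * (-Real.log s) ^ (-(1+γ)) := by
    intro s hs
    have hs0 := hs.1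
    have hlog : Real.log s < 0 := Real.log_neg hs0 hs.2
    set L := -Real.log s with hLdef
    have hL0 : 0 < L := by simp [hLdef]; linarith
    -- the dominating function
    have hgc : Continuous fun a : ℝ => C * (2/L)^γ * s^(a/2) := by
      have : (fun a : ℝ => s ^ (a/2)) = fun a => Real.exp (Real.log s * (a/2)) := by
        funext a; rw [Real.rpow_def_of_pos hs0]
      exact continuous_const.mul (by rw [this]; fun_prop)
    have hpt : ∀ a ∈ Set.Ioc (0:ℝ) 1, ‖s ^ a * (μ a - μ 0)‖ ≤ C * (2/L)^γ * s^(a/2) := by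
      intro a ha
      have ha0 : 0 < a := ha.1
      have hhold := hholder a ⟨ha0.le, ha.2⟩ 0 ⟨le_rfl, zero_le_one⟩
      rw [show |a - 0| = a by rw [sub_zero, abs_of_pos ha0]] at hhold
      have hsa2 : (0:ℝ) ≤ s ^ (a/2) := Real.rpow_nonneg hs0.le _
      have hkey : s^(a/2) * a^γ ≤ (2/L)^γ := by
        have hx : s ^ (a/2) = Real.exp (-(a*L/2)) := by
          rw [Real.rpow_def_of_pos hs0]; congr 1; rw [hLdef]; ring
        have harw : a ^ γ = (a*L/2)^γ * (2/L)^γ := by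
          rw [← Real.mul_rpow (by positivity) (by positivity)]
          congr 1
          field_simp
        rw [hx, harw]
        have := aux_rpow_exp_le hγ0 hγ1 (a*L/2) (by positivity)
        calc Real.exp (-(a*L/2)) * ((a*L/2)^γ * (2/L)^γ)
            = ((a*L/2)^γ * Real.exp (-(a*L/2))) * (2/L)^γ := by ring
          _ ≤ 1 * (2/L)^γ := by
              apply mul_le_mul_of_nonneg_right this (by positivity)
          _ = (2/L)^γ := one_mul _
      have hsplit : s ^ a = s^(a/2) * s^(a/2) := by
        rw [← Real.rpow_add hs0]; congr 1; ring
      rw [Real.norm_eq_abs, abs_mul, abs_of_nonneg (Real.rpow_nonneg hs0.le a), hsplit]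
      calc s^(a/2) * s^(a/2) * |μ a - μ 0| ≤ s^(a/2) * s^(a/2) * (C * a^γ) := by
            apply mul_le_mul_of_nonneg_left hhold (by positivity)
        _ = C * (s^(a/2) * a^γ) * s^(a/2) := by ring
        _ ≤ C * (2/L)^γ * s^(a/2) := by
            apply mul_le_mul_of_nonneg_right _ hsa2
            exact mul_le_mul_of_nonneg_left hkey hC
    have hbd := intervalIntegral.norm_integral_le_abs_of_norm_le
      (f := fun a => s ^ a * (μ a - μ 0)) (μ := MeasureTheory.volume) (a := 0) (b := 1)
      (g := fun a => C * (2/L)^γ * s^(a/2)) ?_ (hgc.intervalIntegrable 0 1)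
    swap
    · rw [Set.uIoc_of_le (by norm_num : (0:ℝ) ≤ 1)]
      exact (MeasureTheory.ae_restrict_mem measurableSet_Ioc).mono hpt
    -- compute the dominating integral
    have hIval : ∫ a in (0:ℝ)..1, C * (2/L)^γ * s^(a/2)
        = C * (2/L)^γ * ((Real.exp (Real.log s / 2) - 1) / (Real.log s / 2)) := by
      rw [intervalIntegral.integral_const_mul]
      congr 1
      have : (fun a : ℝ => s ^ (a/2)) = fun a => Real.exp ((Real.log s / 2) * a) := by
        funext a; rw [Real.rpow_def_of_pos hs0]; congr 1; ring
      rw [this, aux_int_exp _ (ne_of_lt (by linarith : Real.log s / 2 < 0))]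
    have hls : Real.log s = -L := by rw [hLdef]; ring
    have hE1 : Real.exp (Real.log s / 2) < 1 := by
      rw [show (1:ℝ) = Real.exp 0 by simp]
      exact Real.exp_lt_exp.mpr (by linarith)
    have hE0 : 0 < Real.exp (Real.log s / 2) := Real.exp_pos _
    have hrwI : (Real.exp (Real.log s / 2) - 1) / (Real.log s / 2)
        = (1 - Real.exp (Real.log s / 2)) * (2 / L) := by
      have h2 : Real.log s / 2 = -(L/2) := by rw [hls]; ring
      rw [h2, div_neg, ← neg_div, neg_sub, div_div_eq_mul_div, mul_div_assoc]
    have hIle : (Real.exp (Real.log s / 2) - 1) / (Real.log s / 2) ≤ 2 / L := by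
      rw [hrwI]
      calc (1 - Real.exp (Real.log s / 2)) * (2 / L) ≤ 1 * (2/L) :=
            mul_le_mul_of_nonneg_right (by linarith) (by positivity)
        _ = 2/L := one_mul _
    have hIge : (0:ℝ) ≤ (Real.exp (Real.log s / 2) - 1) / (Real.log s / 2) := by
      rw [hrwI]; exact mul_nonneg (by linarith) (by positivity)
    have habs : |∫ a in (0:ℝ)..1, C * (2/L)^γ * s^(a/2)| ≤ C * (2/L)^γ * (2/L) := by
      rw [hIval, abs_of_nonneg (by positivity)]
      exact mul_le_mul_of_nonneg_left hIle (by positivity)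
    have hfinal : C * (2/L)^γ * (2/L) ≤ 4 * C * L ^ (-(1+γ)) := by
      have h2g : (2:ℝ)/L = 2 * L⁻¹ := by ring
      have hrw1 : (2/L)^γ = 2^γ * L^(-γ) := by
        rw [Real.div_rpow (by norm_num) hL0.le, Real.rpow_neg hL0.le, div_eq_mul_inv]
      have h2γ : (2:ℝ)^γ ≤ 2 := by
        calc (2:ℝ)^γ ≤ 2^(1:ℝ) := Real.rpow_le_rpow_of_exponent_le (by norm_num) hγ1
          _ = 2 := Real.rpow_one 2
      have hLmul : L^(-γ) * (2/L) = 2 * L^(-(1+γ)) := by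
        rw [show (2:ℝ)/L = 2 * L^(-(1:ℝ)) by rw [Real.rpow_neg_one]; ring]
        rw [show L^(-γ) * (2 * L^(-(1:ℝ))) = 2 * (L^(-γ) * L^(-(1:ℝ))) by ring,
          ← Real.rpow_add hL0, show -γ + -(1:ℝ) = -(1+γ) by ring]
      calc C * (2/L)^γ * (2/L) = C * 2^γ * (L^(-γ) * (2/L)) := by rw [hrw1]; ring
        _ = C * 2^γ * (2 * L^(-(1+γ))) := by rw [hLmul]
        _ ≤ C * 2 * (2 * L^(-(1+γ))) := by
            apply mul_le_mul_of_nonneg_right _ (by positivity)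
            exact mul_le_mul_of_nonneg_left h2γ hC
        _ = 4 * C * L^(-(1+γ)) := by ring
    calc |∫ a in (0:ℝ)..1, s ^ a * (μ a - μ 0)| ≤ |∫ a in (0:ℝ)..1, C * (2/L)^γ * s^(a/2)| := hbd
      _ ≤ C * (2/L)^γ * (2/L) := habs
      _ ≤ 4 * C * L ^ (-(1+γ)) := hfinal
  -- eventual facts
  have hmem : ∀ᶠ s in l, s ∈ Set.Ioo (0:ℝ) (Real.exp (-1)) :=
    eventually_mem_set.mpr (Ioo_mem_nhdsGT (Real.exp_pos _))
  have hsl : ∀ᶠ s in l, s * (-Real.log s) ≤ 1 := by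
    have h := tendsto_log_mul_rpow_nhdsGT_zero (r := 1) one_pos
    simp only [Real.rpow_one] at h
    have h2 := h.eventually_const_lt (show (-1:ℝ) < 0 by norm_num)
    filter_upwards [h2] with s hs2
    nlinarith
  have he1 : Real.exp (-1 : ℝ) < 1 := by
    rw [show (1:ℝ) = Real.exp 0 by simp]
    exact Real.exp_lt_exp.mpr (by norm_num)
  -- the IsBigO part
  have hO : (fun s : ℝ => P s + μ 0 / Real.log s) =O[l] fun s : ℝ => |Real.log s| ^ (-(1 + γ)) := by
    rw [isBigO_iff]
    refine ⟨μ 0 + 4*C, ?_⟩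
    filter_upwards [hmem, hsl] with s hs1 hs2
    have hs01 : s ∈ Set.Ioo (0:ℝ) 1 := ⟨hs1.1, hs1.2.trans he1⟩
    have hlog : Real.log s < 0 := Real.log_neg hs01.1 hs01.2
    set L := -Real.log s with hLdef
    have hL0 : 0 < L := by simp [hLdef]; linarith
    have hL1 : 1 ≤ L := by
      have : Real.log s < Real.log (Real.exp (-1)) := Real.log_lt_log hs01.1 hs1.2
      rw [Real.log_exp] at this
      simp [hLdef]; linarith
    have habsL : |Real.log s| = L := by rw [abs_of_neg hlog]
    have hsinv : s ≤ L^(-γ) := by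
      have h1 : s ≤ L⁻¹ := by
        rw [inv_eq_one_div, le_div_iff₀ hL0]
        exact hs2
      have h2 : L⁻¹ = L^(-(1:ℝ)) := (Real.rpow_neg_one L).symm
      have h3 : L^(-(1:ℝ)) ≤ L^(-γ) :=
        Real.rpow_le_rpow_of_exponent_le hL1 (by linarith)
      rw [h2] at h1; exact h1.trans h3
    rw [key s hs01]
    simp only [Real.norm_eq_abs]
    rw [habsL, abs_of_nonneg (Real.rpow_nonneg hL0.le _)]
    have hE := Ebound s hs01
    have hterm1 : |μ 0 * s / Real.log s| ≤ μ 0 * L^(-(1+γ)) := by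
      rw [abs_div, abs_of_nonneg (mul_nonneg hμ0.le hs01.1.le), habsL,
        div_le_iff₀ hL0]
      have : L^(-(1+γ)) * L = L^(-γ) := by
        rw [← Real.rpow_add_one hL0.ne']
        congr 1; ring
      rw [mul_assoc, this]
      exact mul_le_mul_of_nonneg_left hsinv hμ0.le
    calc |μ 0 * s / Real.log s + ∫ a in (0:ℝ)..1, s ^ a * (μ a - μ 0)|
        ≤ |μ 0 * s / Real.log s| + |∫ a in (0:ℝ)..1, s ^ a * (μ a - μ 0)| := abs_add_le _ _
      _ ≤ μ 0 * L^(-(1+γ)) + 4 * C * L^(-(1+γ)) := add_le_add hterm1 hE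
      _ = (μ 0 + 4*C) * L^(-(1+γ)) := by ring
  refine ⟨hO, ?_⟩
  -- part 2
  have h2 : (fun s => (P s + μ 0 / Real.log s) * Real.log s) =O[l]
      fun s => |Real.log s| ^ (-γ) := by
    have hmul := hO.mul (isBigO_refl (fun s => Real.log s) l)
    apply hmul.trans
    rw [isBigO_iff]
    refine ⟨1, ?_⟩
    filter_upwards [hmem] with s hs1
    have hs01 : s ∈ Set.Ioo (0:ℝ) 1 := ⟨hs1.1, hs1.2.trans he1⟩
    have hlog : Real.log s < 0 := Real.log_neg hs01.1 hs01.2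
    have hL0 : (0:ℝ) < |Real.log s| := abs_pos.mpr hlog.ne
    rw [one_mul]
    simp only [Real.norm_eq_abs]
    rw [abs_mul, abs_of_nonneg (Real.rpow_nonneg (abs_nonneg _) _),
      abs_of_nonneg (Real.rpow_nonneg (abs_nonneg _) _)]
    apply le_of_eq
    rw [← Real.rpow_add_one hL0.ne', show -(1+γ)+1 = -γ by ring]
  have h3 : Tendsto (fun s : ℝ => |Real.log s| ^ (-γ)) l (nhds 0) :=
    (tendsto_rpow_neg_atTop hγ0).comp
      (tendsto_abs_atBot_atTop.comp Real.tendsto_log_nhdsGT_zero)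
  have h4 : Tendsto (fun s => (P s + μ 0 / Real.log s) * Real.log s) l (nhds 0) :=
    h2.trans_tendsto h3
  have h5 : Tendsto (fun s => μ 0 - (P s + μ 0 / Real.log s) * Real.log s) l (nhds (μ 0)) := by
    simpa using tendsto_const_nhds.sub h4
  apply h5.congr'
  filter_upwards [hmem] with s hs1
  have hs01 : s ∈ Set.Ioo (0:ℝ) 1 := ⟨hs1.1, hs1.2.trans he1⟩
  have hlogne : Real.log s ≠ 0 := (Real.log_neg hs01.1 hs01.2).ne
  field_simp
  simp only [hPdef]
  ring
end
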